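/- (Cluster Lemma) Let Δ be a finite regular CW complex whose cells are partitioned into collections Δ_σ indexed by the elements σ of a finite poset P with unique minimal element, such that for each σ ∈ P the union ⋃_{τ ≤ σ} Δ_τ is a subcomplex of Δ. If for each σ ∈ P one has an acyclic matching M_σ on the cells of Δ_σ (ordered by the face relation of Δ), then the union ⋃_{σ∈P} M_σ is an acyclic matching on the face poset of Δ. -/

import Mathlib

/-- `R` is a matching along the covering (Hasse) relation `E` of a cell/face
poset: each pair `R a b` is a Hasse edge `E a b` (read: `a` is a codimension-one
face of `b`), and the pairs are disjoint (each cell is in at most one pair, in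
either role). -/
def IsMatching {Q : Type*} (E R : Q → Q → Prop) : Prop :=
  (∀ a b, R a b → E a b) ∧
  ∀ a b, R a b →
    (∀ c, R a c → c = b) ∧ (∀ c, R c b → c = a) ∧ (∀ c, ¬ R b c) ∧ (∀ c, ¬ R c a)

/-- One step of the directed graph of a matching `R` on the Hasse diagram `E`:
matched edges are oriented upward, all other Hasse edges downward. -/
def MStep {Q : Type*} (E R : Q → Q → Prop) (x y : Q) : Prop :=
  R x y ∨ (E y x ∧ ¬ R y x)

/-- A matching is acyclic if the directed graph with matched edges up and the
remaining Hasse edges down has no directed cycle. -/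
def IsAcyclicMatching {Q : Type*} (E R : Q → Q → Prop) : Prop :=
  IsMatching E R ∧ ∀ x, ¬ Relation.TransGen (MStep E R) x x

/-- Cluster Lemma: let `Q` be the set of cells of a finite
regular CW complex, with `E a b` the face-poset covering relation ("`a` is a
face of `b` of one dimension lower", witnessed by the grading `dim`), and let
the cells be partitioned by `g : Q → P` over a finite poset `P` with a unique
minimal element so that `⋃_{τ ≤ σ} Δ_τ` is a subcomplex for each `σ`
(equivalently, `g` is monotone along Hasse edges).  If `M σ` is an acyclic
matching on the cells of the fiber `Δ_σ = g⁻¹(σ)` (with the Hasse relation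
restricted to that fiber), then the union `⋃_σ M σ` is an acyclic matching on
the face poset of the whole complex. -/
theorem cluster_lemma {Q P : Type*} [Finite Q] [Finite P] [PartialOrder P] [OrderBot P]
    (E : Q → Q → Prop) (dim : Q → ℕ)
    (hdim : ∀ a b, E a b → dim a + 1 = dim b)
    (g : Q → P) (hg : ∀ a b, E a b → g a ≤ g b)
    (M : P → Q → Q → Prop)
    (hfib : ∀ σ a b, M σ a b → g a = σ ∧ g b = σ)
    (hac : ∀ σ : P,
      IsAcyclicMatching (fun a b => E a b ∧ g a = σ ∧ g b = σ) (M σ)) :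
    IsAcyclicMatching E (fun a b => ∃ σ, M σ a b) := by
  constructor
  · constructor
    · rintro a b ⟨σ, h⟩
      exact ((hac σ).1.1 a b h).1
    · rintro a b ⟨σ, h⟩
      obtain ⟨hga, hgb⟩ := hfib σ a b h
      obtain ⟨h1, h2, h3, h4⟩ := (hac σ).1.2 a b h
      refine ⟨?_, ?_, ?_, ?_⟩
      · rintro c ⟨τ, hc⟩
        have hτ : τ = σ := by rw [← (hfib τ a c hc).1, hga]
        exact h1 c (hτ ▸ hc)
      · rintro c ⟨τ, hc⟩
        have hτ : τ = σ := by rw [← (hfib τ c b hc).2, hgb]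
        exact h2 c (hτ ▸ hc)
      · rintro c ⟨τ, hc⟩
        have hτ : τ = σ := by rw [← (hfib τ b c hc).1, hgb]
        exact h3 c (hτ ▸ hc)
      · rintro c ⟨τ, hc⟩
        have hτ : τ = σ := by rw [← (hfib τ c a hc).2, hga]
        exact h4 c (hτ ▸ hc)
  · intro x hx
    have step_le : ∀ a b, MStep E (fun a b => ∃ σ, M σ a b) a b → g b ≤ g a := by
      rintro a b (⟨σ, h⟩ | ⟨hE, -⟩)
      · obtain ⟨h1, h2⟩ := hfib σ a b h
        rw [h1, h2]
      · exact hg b a hE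
    have trans_le : ∀ a b,
        Relation.TransGen (MStep E (fun a b => ∃ σ, M σ a b)) a b → g b ≤ g a := by
      intro a b h
      induction h with
      | single h => exact step_le _ _ h
      | tail _ h ih => exact (step_le _ _ h).trans ih
    set σ := g x with hσ
    have conv : ∀ a b, g a = σ → g b = σ →
        MStep E (fun a b => ∃ σ, M σ a b) a b →
        MStep (fun a b => E a b ∧ g a = σ ∧ g b = σ) (M σ) a b := by
      rintro a b ha hb (⟨τ, h⟩ | ⟨hE, hn⟩)
      · left
        have hτ : τ = σ := by rw [← (hfib τ a b h).1, ha]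
        exact hτ ▸ h
      · exact Or.inr ⟨⟨hE, hb, ha⟩, fun h => hn ⟨σ, h⟩⟩
    have key : ∀ a b, g b = σ →
        Relation.TransGen (MStep E (fun a b => ∃ σ, M σ a b)) a b → g a = σ →
        Relation.TransGen (MStep (fun a b => E a b ∧ g a = σ ∧ g b = σ) (M σ)) a b := by
      intro a b hb h
      induction h using Relation.TransGen.head_induction_on with
      | single h => exact fun ha => Relation.TransGen.single (conv _ _ ha hb h)
      | @head a' c hstep htrans ih =>
        intro ha
        have hc : g c = σ := le_antisymm (ha ▸ step_le _ _ hstep)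
          (hb ▸ trans_le _ _ htrans)
        exact Relation.TransGen.head (conv _ _ ha hc hstep) (ih hc)
    exact (hac σ).2 x (key x x rfl hx rfl)
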